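/- Let d be a positive integer and p : ℝ^d → ℝ a continuous probability density with finite second moments (∫ ‖y‖² p(y) dy < ∞). Let x' ∈ ℝ^d with p(x') > 0, and define p_δ(x') = ∫_{ℝ^d} p(x' − y) N^δ_d(y) dy. Then lim_{δ → −∞} (∂/∂δ) log p_δ(x') = 0. -/

import Mathlib

open MeasureTheory Real Filter Topology

/-- The density of the Gaussian distribution `N(0, e^{2δ} I_k)` on `ℝ^k`. -/
noncomputable def gaussDens (k : ℕ) (δ : ℝ) (y : EuclideanSpace ℝ (Fin k)) : ℝ :=
  (2 * π) ^ (-(k : ℝ) / 2) * Real.exp (-(k : ℝ) * δ) *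
    Real.exp (-Real.exp (-2 * δ) * ‖y‖ ^ 2 / 2)

section Aux

variable {d : ℕ}
local notation "E" => EuclideanSpace ℝ (Fin d)

lemma integrable_gaussE {b : ℝ} (hb : 0 < b) :
    Integrable (fun z : E => exp (-b * ‖z‖ ^ 2)) := by
  have h := (GaussianFourier.integrable_cexp_neg_mul_sq_norm_add
    (V := E) (b := (b : ℂ)) (by simpa using hb) 0 0).norm
  refine h.congr ?_
  filter_upwards with z
  rw [Complex.norm_exp]
  norm_cast
  rw [inner_zero_left]
  norm_num

lemma integrable_of_le_gauss {h : E → ℝ} (hm : AEStronglyMeasurable h volume)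
    {b C : ℝ} (hb : 0 < b) (hle : ∀ z, |h z| ≤ C * exp (-b * ‖z‖ ^ 2)) :
    Integrable h := by
  refine ((integrable_gaussE hb).const_mul C).mono' hm ?_
  filter_upwards with z
  simpa [Real.norm_eq_abs] using hle z

lemma cov_smul (f : E → ℝ) (δ : ℝ) :
    ∫ z : E, f (exp δ • z) = exp (-(d : ℝ) * δ) * ∫ y, f y := by
  rw [MeasureTheory.Measure.integral_comp_smul volume f (Real.exp δ), finrank_euclideanSpace_fin,
    smul_eq_mul]
  congr 1
  rw [abs_of_pos (by positivity), ← Real.exp_nat_mul, ← Real.exp_neg]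
  ring_nf

lemma tendsto_aux {a : ℝ} (ha : 0 < a) (n : ℕ) :
    Tendsto (fun δ => exp (-(n : ℝ) * δ) * exp (-a * exp (-2 * δ))) atBot (𝓝 0) := by
  have h1 : Tendsto (fun δ : ℝ => exp (-δ)) atBot atTop :=
    Real.tendsto_exp_atTop.comp tendsto_neg_atBot_atTop
  have key : Tendsto (fun u : ℝ => u ^ n * exp (-(a * u ^ 2))) atTop (𝓝 0) := by
    apply squeeze_zero' (g := fun u : ℝ => u ^ n * exp (-u))
    · filter_upwards [eventually_ge_atTop (0 : ℝ)] with u hu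
      positivity
    · filter_upwards [eventually_ge_atTop (1 / a), eventually_ge_atTop (0 : ℝ)] with u hu hu0
      have huu : u ≤ a * u ^ 2 := by
        rcases eq_or_lt_of_le hu0 with h | h
        · nlinarith
        · have : 1 ≤ a * u := by
            rw [div_le_iff₀ ha] at hu; nlinarith
          nlinarith
      exact mul_le_mul_of_nonneg_left (Real.exp_le_exp.2 (by linarith)) (by positivity)
    · exact tendsto_pow_mul_exp_neg_atTop_nhds_zero n
  have := key.comp h1
  refine this.congr fun δ => ?_
  simp only [Function.comp]
  rw [← Real.exp_nat_mul]
  congr 2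
  · ring
  · rw [show rexp (-δ) ^ 2 = rexp (-2*δ) by rw [← Real.exp_nat_mul]; ring_nf]
    ring

lemma gauss_pos (δ : ℝ) (y : E) : 0 < gaussDens d δ y := by
  unfold gaussDens; positivity

lemma gauss_cont (δ : ℝ) : Continuous (fun y : E => gaussDens d δ y) := by
  unfold gaussDens; fun_prop

lemma gauss_le (δ : ℝ) (y : E) :
    gaussDens d δ y ≤ (2 * π) ^ (-(d : ℝ) / 2) * Real.exp (-(d : ℝ) * δ) := by
  unfold gaussDens
  have h1 : Real.exp (-Real.exp (-2 * δ) * ‖y‖ ^ 2 / 2) ≤ 1 := by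
    rw [Real.exp_le_one_iff]
    have : 0 ≤ Real.exp (-2 * δ) * ‖y‖ ^ 2 := by positivity
    linarith
  nlinarith [Real.exp_pos (-(d : ℝ) * δ), Real.rpow_pos_of_pos (by positivity : (0:ℝ) < 2 * π) (-(d : ℝ) / 2), mul_pos (Real.rpow_pos_of_pos (by positivity : (0:ℝ) < 2 * π) (-(d : ℝ) / 2)) (Real.exp_pos (-(d : ℝ) * δ))]

lemma gauss_hasDeriv (δ : ℝ) (y : E) :
    HasDerivAt (fun t => gaussDens d t y)
      ((Real.exp (-2 * δ) * ‖y‖ ^ 2 - d) * gaussDens d δ y) δ := by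
  have h2 : HasDerivAt (fun t : ℝ => Real.exp (-(d : ℝ) * t))
      (Real.exp (-(d : ℝ) * δ) * (-(d : ℝ))) δ := by
    simpa using ((hasDerivAt_id δ).const_mul (-(d : ℝ))).exp
  have h3a : HasDerivAt (fun t : ℝ => Real.exp (-2 * t)) (Real.exp (-2 * δ) * (-2)) δ := by
    simpa using ((hasDerivAt_id δ).const_mul (-2 : ℝ)).exp
  have h3 : HasDerivAt (fun t : ℝ => Real.exp (-2 * t) * (-(‖y‖ ^ 2) / 2))
      (Real.exp (-2 * δ) * (-2) * (-(‖y‖ ^ 2) / 2)) δ := h3a.mul_const _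
  have key := (h2.mul h3.exp).const_mul ((2 * π) ^ (-(d : ℝ) / 2))
  have hfun : (fun t => gaussDens d t y)
      = (fun t : ℝ => (2 * π) ^ (-(d : ℝ) / 2) *
        (Real.exp (-(d : ℝ) * t) * Real.exp (Real.exp (-2 * t) * (-(‖y‖ ^ 2) / 2)))) := by
    funext t
    unfold gaussDens
    rw [mul_assoc]
    congr 2
    ring
  rw [hfun]
  refine key.congr_deriv ?_
  unfold gaussDens
  rw [show (-Real.exp (-2 * δ) * ‖y‖ ^ 2 / 2) = Real.exp (-2 * δ) * (-(‖y‖ ^ 2) / 2) from by ring]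
  ring

lemma gauss_scale (δ : ℝ) (z : E) :
    gaussDens d δ (exp δ • z) = exp (-(d : ℝ) * δ) * gaussDens d 0 z := by
  unfold gaussDens
  rw [norm_smul, Real.norm_eq_abs, abs_of_pos (Real.exp_pos δ), mul_pow]
  have h1 : Real.exp (-2 * δ) * (Real.exp δ ^ 2) = 1 := by
    rw [sq, ← Real.exp_add, ← Real.exp_add, show -2 * δ + (δ + δ) = (0:ℝ) from by ring,
      Real.exp_zero]
  have h2 : -Real.exp (-2 * δ) * (Real.exp δ ^ 2 * ‖z‖ ^ 2) / 2
      = -Real.exp (-2 * 0) * ‖z‖ ^ 2 / 2 := by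
    rw [show -Real.exp (-2 * δ) * (Real.exp δ ^ 2 * ‖z‖ ^ 2)
        = -(Real.exp (-2 * δ) * Real.exp δ ^ 2) * ‖z‖ ^ 2 from by ring, h1]
    norm_num
  rw [h2]
  norm_num
  ring

lemma gauss_bound_quarter (z : E) :
    gaussDens d 0 z ≤ (2 * π) ^ (-(d : ℝ) / 2) * exp (-(1/4 : ℝ) * ‖z‖ ^ 2) := by
  unfold gaussDens
  simp only [mul_zero, neg_zero, Real.exp_zero, mul_one, one_mul]
  refine mul_le_mul_of_nonneg_left ?_ (le_of_lt (by positivity))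
  exact Real.exp_le_exp.2 (by nlinarith [sq_nonneg ‖z‖])

lemma sq_mul_exp_quarter (t : ℝ) (ht : 0 ≤ t) : t * Real.exp (-(t / 4)) ≤ 4 := by
  have h := Real.add_one_le_exp (t / 4)
  have h2 : 0 < Real.exp (t / 4) := Real.exp_pos _
  rw [Real.exp_neg]
  rw [mul_inv_le_iff₀ h2]
  nlinarith

lemma gauss2_bound_quarter (z : E) :
    |(‖z‖ ^ 2 - (d : ℝ)) * gaussDens d 0 z|
      ≤ ((2 * π) ^ (-(d : ℝ) / 2) * (4 + d)) * exp (-(1/4 : ℝ) * ‖z‖ ^ 2) := by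
  have hg : 0 < gaussDens d 0 z := by unfold gaussDens; positivity
  rw [abs_mul, abs_of_pos hg]
  have h1 : |‖z‖ ^ 2 - (d : ℝ)| ≤ ‖z‖ ^ 2 + d := by
    rw [abs_le]; constructor <;> nlinarith [sq_nonneg ‖z‖, Nat.cast_nonneg (α := ℝ) d]
  have hgval : gaussDens d 0 z = (2 * π) ^ (-(d : ℝ) / 2) * exp (-(‖z‖ ^ 2) / 2) := by
    unfold gaussDens; norm_num
  calc |‖z‖ ^ 2 - (d : ℝ)| * gaussDens d 0 z
      ≤ (‖z‖ ^ 2 + d) * gaussDens d 0 z := by gcongr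
    _ = (2 * π) ^ (-(d : ℝ) / 2) *
        ((‖z‖ ^ 2 * exp (-(‖z‖ ^ 2 / 4)) + d * exp (-(‖z‖ ^ 2 / 4))) * exp (-(1/4 : ℝ) * ‖z‖ ^ 2)) := by
      rw [hgval]
      rw [show (-(‖z‖ ^ 2) / 2 : ℝ) = -(‖z‖ ^ 2 / 4) + -(1/4 : ℝ) * ‖z‖ ^ 2 from by ring,
        Real.exp_add]
      ring
    _ ≤ ((2 * π) ^ (-(d : ℝ) / 2) * (4 + d)) * exp (-(1/4 : ℝ) * ‖z‖ ^ 2) := by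
      rw [mul_assoc ((2 * π) ^ (-(d : ℝ) / 2))]
      refine mul_le_mul_of_nonneg_left ?_ (le_of_lt (by positivity))
      refine mul_le_mul_of_nonneg_right ?_ (le_of_lt (Real.exp_pos _))
      have := sq_mul_exp_quarter (‖z‖ ^ 2) (by positivity)
      have he : Real.exp (-(‖z‖ ^ 2 / 4)) ≤ 1 := by
        rw [Real.exp_le_one_iff]
        have : (0:ℝ) ≤ ‖z‖ ^ 2 / 4 := by positivity
        linarith
      nlinarith [Real.exp_pos (-(‖z‖ ^ 2 / 4)), Nat.cast_nonneg (α := ℝ) d]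

set_option maxHeartbeats 1000000 in
lemma key_tendsto (f : E → ℝ) (hf_cont : Continuous f) (hf0 : ∀ y, 0 ≤ f y)
    (hf_int : Integrable f) (x' : E) (k : E → ℝ) (hk_cont : Continuous k)
    {C : ℝ} (hk_bd : ∀ z, |k z| ≤ C * exp (-(1/4 : ℝ) * ‖z‖ ^ 2)) :
    Tendsto (fun δ => ∫ z : E, f (x' - exp δ • z) * k z) atBot
      (𝓝 (f x' * ∫ z : E, k z)) := by
  have hC : 0 ≤ C := by
    have := (abs_nonneg (k 0)).trans (hk_bd 0)
    nlinarith [Real.exp_pos (-(1/4 : ℝ) * ‖(0 : E)‖ ^ 2)]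
  have hk_int : Integrable k :=
    integrable_of_le_gauss hk_cont.aestronglyMeasurable (by norm_num) hk_bd
  have hq_int : Integrable (fun y : E => f (x' - y)) := hf_int.comp_sub_left x'
  have hfs : ∀ δ : ℝ, Integrable (fun z : E => f (x' - exp δ • z)) := fun δ =>
    hq_int.comp_smul (Real.exp_ne_zero δ)
  have hfs_cont : ∀ δ : ℝ, Continuous (fun z : E => f (x' - exp δ • z)) := fun δ =>
    hf_cont.comp (continuous_const.sub (continuous_const_smul (exp δ)))
  have hprod : ∀ δ : ℝ, Integrable (fun z : E => f (x' - exp δ • z) * k z) := by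
    intro δ
    refine ((hfs δ).const_mul C).mono' ((hfs_cont δ).mul hk_cont).aestronglyMeasurable ?_
    filter_upwards with z
    rw [Real.norm_eq_abs, abs_mul, abs_of_nonneg (hf0 _)]
    calc f (x' - exp δ • z) * |k z| ≤ f (x' - exp δ • z) * (C * exp (-(1/4:ℝ) * ‖z‖^2)) := by
          exact mul_le_mul_of_nonneg_left (hk_bd z) (hf0 _)
      _ ≤ f (x' - exp δ • z) * (C * 1) := by
          refine mul_le_mul_of_nonneg_left (mul_le_mul_of_nonneg_left ?_ hC) (hf0 _)
          rw [Real.exp_le_one_iff]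
          have : (0:ℝ) ≤ (1/4:ℝ) * ‖z‖^2 := by positivity
          linarith
      _ = C * f (x' - exp δ • z) := by ring
  have hIs : ∀ δ : ℝ, ∫ z : E, f (x' - exp δ • z) = exp (-(d:ℝ)*δ) * ∫ y, f y := by
    intro δ
    have h := cov_smul (d := d) (fun y => f (x' - y)) δ
    rw [h, MeasureTheory.integral_sub_left_eq_self f volume x']
  -- the std 1/8-gaussian
  set e8 : E → ℝ := fun z => exp (-(1/8 : ℝ) * ‖z‖ ^ 2) with he8
  have he8_int : Integrable e8 := integrable_gaussE (by norm_num)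
  have he8_01 : ∀ z, 0 < e8 z := fun z => Real.exp_pos _
  have he8_le1 : ∀ z, e8 z ≤ 1 := by
    intro z
    rw [he8, Real.exp_le_one_iff]
    have : (0:ℝ) ≤ (1/8:ℝ) * ‖z‖^2 := by positivity
    linarith
  set G8 : ℝ := ∫ z : E, e8 z with hG8
  have hG80 : 0 ≤ G8 := integral_nonneg fun z => (he8_01 z).le
  set Ik : ℝ := ∫ z : E, |k z| with hIkdef
  have hIk0 : 0 ≤ Ik := integral_nonneg fun z => abs_nonneg _
  rw [Metric.tendsto_nhds]
  intro ε hε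
  set ε' : ℝ := ε / (2 * (Ik + 1)) with hε'def
  have hε' : 0 < ε' := by positivity
  obtain ⟨r, hr, hball⟩ := Metric.continuousAt_iff.1 (hf_cont.continuousAt (x := x')) ε' hε'
  set a : ℝ := (r/2)^2/8 with hadef
  have ha : 0 < a := by positivity
  set T : ℝ → ℝ := fun δ => C * ((∫ y, f y) * (exp (-(d:ℝ)*δ) * exp (-a * exp (-2*δ)))
    + (f x' * G8) * (exp (-((0:ℕ):ℝ)*δ) * exp (-a * exp (-2*δ)))) with hT
  have hT0 : Tendsto T atBot (𝓝 0) := by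
    have h1 := (tendsto_aux ha d).const_mul (∫ y : E, f y)
    have h2 := (tendsto_aux ha 0).const_mul (f x' * G8)
    have h3 := ((h1.add h2).const_mul C)
    simpa only [mul_zero, add_zero] using h3
  have hTev : ∀ᶠ δ in atBot, T δ < ε/2 := by
    have := hT0.eventually (eventually_lt_nhds (show (0:ℝ) < ε/2 by positivity))
    simpa using this
  rw [eventually_atBot] at hTev ⊢
  obtain ⟨b, hb⟩ := hTev
  refine ⟨b, fun δ hδ => ?_⟩
  -- core estimate
  have hest : dist (∫ z : E, f (x' - exp δ • z) * k z) (f x' * ∫ z : E, k z)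
      ≤ ε' * Ik + T δ := by
    have hL : f x' * ∫ z : E, k z = ∫ z : E, f x' * k z := (integral_const_mul _ _).symm
    have hg_int : Integrable (fun z : E => (f (x' - exp δ • z) - f x') * k z) := by
      have h0 := (hprod δ).sub (hk_int.const_mul (f x'))
      refine h0.congr ?_
      filter_upwards with z
      simp only [Pi.sub_apply]
      ring
    have hsub : (∫ z : E, f (x' - exp δ • z) * k z) - f x' * ∫ z : E, k z
        = ∫ z : E, (f (x' - exp δ • z) - f x') * k z := by
      rw [hL, ← integral_sub (hprod δ) (hk_int.const_mul (f x'))]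
      apply integral_congr_ae
      filter_upwards with z
      ring
    rw [Real.dist_eq, hsub]
    set S : Set E := Metric.closedBall 0 ((r/2) * exp (-δ)) with hSdef
    have hS : MeasurableSet S := measurableSet_closedBall
    have habs : |∫ z : E, (f (x' - exp δ • z) - f x') * k z|
        ≤ ∫ z : E, |(f (x' - exp δ • z) - f x') * k z| := by
      have hni := norm_integral_le_integral_norm (μ := volume)
        (fun z : E => (f (x' - exp δ • z) - f x') * k z)
      simpa only [Real.norm_eq_abs] using hni
    have hsplit : (∫ z : E, |(f (x' - exp δ • z) - f x') * k z|)
        = (∫ z in S, |(f (x' - exp δ • z) - f x') * k z|)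
          + ∫ z in Sᶜ, |(f (x' - exp δ • z) - f x') * k z| :=
      (integral_add_compl hS hg_int.abs).symm
    have hP1 : (∫ z in S, |(f (x' - exp δ • z) - f x') * k z|) ≤ ε' * Ik := by
      have h1 : ∀ z ∈ S, |(f (x' - exp δ • z) - f x') * k z| ≤ ε' * |k z| := by
        intro z hz
        rw [abs_mul]
        refine mul_le_mul_of_nonneg_right ?_ (abs_nonneg _)
        have hdist : dist (x' - exp δ • z) x' < r := by
          rw [dist_eq_norm, sub_sub_cancel_left, norm_neg, norm_smul, Real.norm_eq_abs,
            abs_of_pos (Real.exp_pos δ)]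
          have hz' : ‖z‖ ≤ (r/2) * exp (-δ) := by
            simpa [dist_zero_right] using (Metric.mem_closedBall.1 hz)
          calc exp δ * ‖z‖ ≤ exp δ * ((r/2) * exp (-δ)) :=
                mul_le_mul_of_nonneg_left hz' (Real.exp_pos δ).le
            _ = (r/2) * (exp δ * exp (-δ)) := by ring
            _ = r/2 := by rw [← Real.exp_add]; simp
            _ < r := by linarith
        have h2 := hball hdist
        rw [Real.dist_eq] at h2
        exact h2.le
      calc (∫ z in S, |(f (x' - exp δ • z) - f x') * k z|)
          ≤ ∫ z in S, ε' * |k z| :=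
            setIntegral_mono_on hg_int.abs.integrableOn
              ((hk_int.abs.const_mul ε').integrableOn) hS h1
        _ ≤ ∫ z : E, ε' * |k z| :=
            setIntegral_le_integral (hk_int.abs.const_mul ε')
              (Eventually.of_forall fun z => by positivity)
        _ = ε' * Ik := integral_const_mul _ _
    have hP2 : (∫ z in Sᶜ, |(f (x' - exp δ • z) - f x') * k z|) ≤ T δ := by
      set c : ℝ := C * exp (-a * exp (-2*δ)) with hcdef
      have hc0 : 0 ≤ c := mul_nonneg hC (Real.exp_pos _).le
      set B : E → ℝ := fun z => (f (x' - exp δ • z) + f x') * (c * e8 z) with hBdef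
      have hB0 : ∀ z, 0 ≤ B z := by
        intro z
        have h5 := hf0 (x' - exp δ • z); have h6 := hf0 x'
        exact mul_nonneg (by linarith) (mul_nonneg hc0 (he8_01 z).le)
      have hfse8_int : Integrable (fun z : E => f (x' - exp δ • z) * e8 z) := by
        refine (hfs δ).mono'
          ((hfs_cont δ).mul (by rw [he8]; fun_prop)).aestronglyMeasurable ?_
        filter_upwards with z
        rw [Real.norm_eq_abs, abs_mul, abs_of_nonneg (hf0 _), abs_of_pos (he8_01 z)]
        calc f (x' - exp δ • z) * e8 z ≤ f (x' - exp δ • z) * 1 :=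
              mul_le_mul_of_nonneg_left (he8_le1 z) (hf0 _)
          _ = f (x' - exp δ • z) := mul_one _
      have hB_int : Integrable B := by
        have h1 : Integrable (fun z : E =>
            c * (f (x' - exp δ • z) * e8 z) + (c * f x') * e8 z) :=
          (hfse8_int.const_mul c).add (he8_int.const_mul _)
        refine h1.congr ?_
        filter_upwards with z
        rw [hBdef]
        ring
      have hbd : ∀ z ∈ Sᶜ, |(f (x' - exp δ • z) - f x') * k z| ≤ B z := by
        intro z hz
        have hzn : (r/2) * exp (-δ) ≤ ‖z‖ := by
          by_contra h
          push_neg at h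
          exact hz (Metric.mem_closedBall.2 (by simpa [dist_zero_right] using h.le))
        have hk2 : |k z| ≤ c * e8 z := by
          have h2 : exp (-(1/4:ℝ) * ‖z‖^2) ≤ exp (-a * exp (-2*δ)) * e8 z := by
            rw [he8, ← Real.exp_add]
            apply Real.exp_le_exp.2
            have h3 : ((r/2) * exp (-δ))^2 ≤ ‖z‖^2 :=
              pow_le_pow_left₀ (by positivity) hzn 2
            have h4 : ((r/2) * exp (-δ))^2 = 8 * (a * exp (-2*δ)) := by
              rw [hadef, mul_pow,
                show (exp (-δ))^2 = exp (-2*δ) from by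
                  rw [sq, ← Real.exp_add]; ring_nf]
              ring
            nlinarith
          calc |k z| ≤ C * exp (-(1/4:ℝ)*‖z‖^2) := hk_bd z
            _ ≤ C * (exp (-a * exp (-2*δ)) * e8 z) := mul_le_mul_of_nonneg_left h2 hC
            _ = c * e8 z := by rw [hcdef]; ring
        calc |(f (x' - exp δ • z) - f x') * k z|
            = |f (x' - exp δ • z) - f x'| * |k z| := abs_mul _ _
          _ ≤ (f (x' - exp δ • z) + f x') * (c * e8 z) := by
              have h5 := hf0 (x' - exp δ • z); have h6 := hf0 x'
              apply mul_le_mul ?_ hk2 (abs_nonneg _) (by linarith)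
              rw [abs_le]
              constructor <;> nlinarith
          _ = B z := rfl
      calc (∫ z in Sᶜ, |(f (x' - exp δ • z) - f x') * k z|)
          ≤ ∫ z in Sᶜ, B z :=
            setIntegral_mono_on hg_int.abs.integrableOn hB_int.integrableOn hS.compl hbd
        _ ≤ ∫ z : E, B z := setIntegral_le_integral hB_int (Eventually.of_forall hB0)
        _ = c * ((∫ z : E, f (x' - exp δ • z) * e8 z) + f x' * G8) := by
            rw [hBdef,
              show (fun z : E => (f (x' - exp δ • z) + f x') * (c * e8 z))
                = fun z => c * (f (x' - exp δ • z) * e8 z) + (c * f x') * e8 z from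
                funext fun z => by ring,
              integral_add (hfse8_int.const_mul c) (he8_int.const_mul _),
              integral_const_mul, integral_const_mul, hG8]
            ring
        _ ≤ c * (exp (-(d:ℝ)*δ) * (∫ y, f y) + f x' * G8) := by
            apply mul_le_mul_of_nonneg_left ?_ hc0
            have h7 : (∫ z : E, f (x' - exp δ • z) * e8 z)
                ≤ ∫ z : E, f (x' - exp δ • z) := by
              apply integral_mono hfse8_int (hfs δ)
              intro z
              calc f (x' - exp δ • z) * e8 z ≤ f (x' - exp δ • z) * 1 :=
                    mul_le_mul_of_nonneg_left (he8_le1 z) (hf0 _)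
                _ = f (x' - exp δ • z) := mul_one _
            rw [← hIs δ]
            linarith
        _ = T δ := by
            rw [hT, hcdef]
            simp only [Nat.cast_zero, neg_zero, zero_mul, Real.exp_zero]
            ring
    calc |∫ z : E, (f (x' - exp δ • z) - f x') * k z|
        ≤ ∫ z : E, |(f (x' - exp δ • z) - f x') * k z| := habs
      _ = _ := hsplit
      _ ≤ ε' * Ik + T δ := add_le_add hP1 hP2
  have h1 : ε' * Ik ≤ ε/2 := by
    rw [hε'def, div_mul_eq_mul_div, div_le_div_iff₀ (by positivity) (by norm_num)]
    nlinarith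
  calc dist (∫ z : E, f (x' - exp δ • z) * k z) (f x' * ∫ z : E, k z)
      ≤ ε' * Ik + T δ := hest
    _ < ε/2 + ε/2 := by
        have := hb δ hδ
        linarith
    _ = ε := by ring

lemma integrable_sq_gauss {b : ℝ} (hb : 0 < b) :
    Integrable (fun z : E => ‖z‖ ^ 2 * exp (-b * ‖z‖ ^ 2)) := by
  refine integrable_of_le_gauss
    (((continuous_norm.pow 2).mul (Continuous.rexp (by fun_prop))).aestronglyMeasurable)
    (show (0:ℝ) < b/2 by linarith) (C := 2 / b) ?_
  intro z
  rw [abs_of_nonneg (by positivity)]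
  have h1 : ‖z‖ ^ 2 * exp (-(b / 2) * ‖z‖ ^ 2) ≤ 2 / b := by
    have h2 := Real.add_one_le_exp ((b / 2) * ‖z‖ ^ 2)
    rw [show (-(b / 2) * ‖z‖ ^ 2) = -((b / 2) * ‖z‖ ^ 2) from by ring, Real.exp_neg,
      mul_inv_le_iff₀ (Real.exp_pos _)]
    have h3 : 0 < 2 / b := by positivity
    have h4 : (2 / b) * (b / 2) = 1 := by field_simp
    nlinarith [mul_le_mul_of_nonneg_left h2 h3.le]
  calc ‖z‖ ^ 2 * exp (-b * ‖z‖ ^ 2)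
      = (‖z‖ ^ 2 * exp (-(b / 2) * ‖z‖ ^ 2)) * exp (-(b / 2) * ‖z‖ ^ 2) := by
        rw [mul_assoc, ← Real.exp_add,
          show (-(b / 2) * ‖z‖ ^ 2 + -(b / 2) * ‖z‖ ^ 2) = -b * ‖z‖ ^ 2 from by ring]
    _ ≤ (2 / b) * exp (-(b / 2) * ‖z‖ ^ 2) :=
        mul_le_mul_of_nonneg_right h1 (Real.exp_pos _).le

lemma integrable_gauss_dens (δ : ℝ) : Integrable (fun y : E => gaussDens d δ y) := by
  refine integrable_of_le_gauss (gauss_cont δ).aestronglyMeasurable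
    (show (0:ℝ) < exp (-2 * δ) / 2 by positivity)
    (C := (2 * π) ^ (-(d : ℝ) / 2) * exp (-(d : ℝ) * δ)) ?_
  intro y
  rw [abs_of_pos (gauss_pos δ y)]
  unfold gaussDens
  rw [show (-(exp (-2 * δ) / 2) * ‖y‖ ^ 2) = -exp (-2 * δ) * ‖y‖ ^ 2 / 2 from by ring]

-- derivative of `δ ↦ ∫ gaussDens d δ` via dominated convergence
lemma gauss_integral_hasDeriv (δ₀ : ℝ) :
    HasDerivAt (fun δ => ∫ y : E, gaussDens d δ y)
      (∫ y : E, (exp (-2 * δ₀) * ‖y‖ ^ 2 - d) * gaussDens d δ₀ y) δ₀ := by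
  have hcF' : Continuous (fun y : E => (exp (-2 * δ₀) * ‖y‖ ^ 2 - d) * gaussDens d δ₀ y) :=
    ((continuous_const.mul (continuous_norm.pow 2)).sub continuous_const).mul (gauss_cont δ₀)
  have hboundint : Integrable (fun y : E =>
      (exp (-2 * (δ₀ - 1)) * ‖y‖ ^ 2 + d) * ((2 * π) ^ (-(d : ℝ) / 2) * exp (-(d : ℝ) * (δ₀ - 1)))
        * exp (-(exp (-2 * (δ₀ + 1)) / 2) * ‖y‖ ^ 2)) := by
    have h1 := (integrable_sq_gauss (d := d)
      (show (0:ℝ) < exp (-2 * (δ₀ + 1)) / 2 by positivity)).const_mul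
      (exp (-2 * (δ₀ - 1)) * ((2 * π) ^ (-(d : ℝ) / 2) * exp (-(d : ℝ) * (δ₀ - 1))))
    have h2 := (integrable_gaussE (d := d)
      (show (0:ℝ) < exp (-2 * (δ₀ + 1)) / 2 by positivity)).const_mul
      ((d : ℝ) * ((2 * π) ^ (-(d : ℝ) / 2) * exp (-(d : ℝ) * (δ₀ - 1))))
    refine (h1.add h2).congr ?_
    filter_upwards with y
    simp only [Pi.add_apply]
    ring
  have h := hasDerivAt_integral_of_dominated_loc_of_deriv_le (μ := volume)
    (F := fun δ (y : E) => gaussDens d δ y)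
    (F' := fun δ (y : E) => (exp (-2 * δ) * ‖y‖ ^ 2 - d) * gaussDens d δ y)
    (x₀ := δ₀)
    (bound := fun y : E =>
      (exp (-2 * (δ₀ - 1)) * ‖y‖ ^ 2 + d) * ((2 * π) ^ (-(d : ℝ) / 2) * exp (-(d : ℝ) * (δ₀ - 1)))
        * exp (-(exp (-2 * (δ₀ + 1)) / 2) * ‖y‖ ^ 2))
    (s := Metric.ball δ₀ 1) (Metric.ball_mem_nhds δ₀ one_pos)
    (Eventually.of_forall fun δ => (gauss_cont δ).aestronglyMeasurable)
    (integrable_gauss_dens δ₀)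
    hcF'.aestronglyMeasurable
    ?_ hboundint
    (Eventually.of_forall fun y δ _ => gauss_hasDeriv δ y)
  · exact h.2
  · refine Eventually.of_forall fun y => fun δ hδ => ?_
    have hδ1 : δ₀ - 1 < δ ∧ δ < δ₀ + 1 := by
      have h2 := abs_lt.1 (by simpa [Real.dist_eq] using hδ)
      constructor <;> linarith [h2.1, h2.2]
    have hy : (0:ℝ) ≤ ‖y‖ ^ 2 := by positivity
    have hd0 : (0:ℝ) ≤ (d : ℝ) := Nat.cast_nonneg d
    have h1 : |exp (-2 * δ) * ‖y‖ ^ 2 - d| ≤ exp (-2 * (δ₀ - 1)) * ‖y‖ ^ 2 + d := by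
      have he : exp (-2 * δ) ≤ exp (-2 * (δ₀ - 1)) := Real.exp_le_exp.2 (by linarith [hδ1.1])
      rw [abs_le]
      constructor <;> nlinarith [Real.exp_pos (-2 * δ),
        mul_le_mul_of_nonneg_right he hy]
    have h2 : gaussDens d δ y
        ≤ (2 * π) ^ (-(d : ℝ) / 2) * exp (-(d : ℝ) * (δ₀ - 1))
          * exp (-(exp (-2 * (δ₀ + 1)) / 2) * ‖y‖ ^ 2) := by
      unfold gaussDens
      have ha : exp (-(d : ℝ) * δ) ≤ exp (-(d : ℝ) * (δ₀ - 1)) :=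
        Real.exp_le_exp.2 (by nlinarith [hδ1.1])
      have hbb : exp (-exp (-2 * δ) * ‖y‖ ^ 2 / 2)
          ≤ exp (-(exp (-2 * (δ₀ + 1)) / 2) * ‖y‖ ^ 2) := by
        apply Real.exp_le_exp.2
        have he : exp (-2 * (δ₀ + 1)) ≤ exp (-2 * δ) := Real.exp_le_exp.2 (by linarith [hδ1.2])
        nlinarith [mul_le_mul_of_nonneg_right he hy]
      have hA : (0:ℝ) ≤ (2 * π) ^ (-(d : ℝ) / 2) := by positivity
      exact mul_le_mul (mul_le_mul_of_nonneg_left ha hA) hbb (Real.exp_pos _).le (by positivity)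
    show ‖(exp (-2 * δ) * ‖y‖ ^ 2 - (d:ℝ)) * gaussDens d δ y‖
        ≤ (exp (-2 * (δ₀ - 1)) * ‖y‖ ^ 2 + d)
          * ((2 * π) ^ (-(d : ℝ) / 2) * exp (-(d : ℝ) * (δ₀ - 1)))
          * exp (-(exp (-2 * (δ₀ + 1)) / 2) * ‖y‖ ^ 2)
    rw [Real.norm_eq_abs, abs_mul, abs_of_pos (gauss_pos δ y)]
    exact le_trans (mul_le_mul h1 h2 (gauss_pos δ y).le (by positivity)) (le_of_eq (by ring))

lemma gauss_moment_zero : (∫ z : E, (‖z‖ ^ 2 - (d : ℝ)) * gaussDens d 0 z) = 0 := by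
  have hJconst : ∀ δ : ℝ, (∫ y : E, gaussDens d δ y) = ∫ z : E, gaussDens d 0 z := by
    intro δ
    have h := cov_smul (d := d) (fun y => gaussDens d δ y) δ
    simp only [gauss_scale] at h
    rw [integral_const_mul] at h
    exact (mul_left_cancel₀ (Real.exp_ne_zero _) h).symm
  have hconst : (fun δ : ℝ => ∫ y : E, gaussDens d δ y)
      = fun _ => ∫ z : E, gaussDens d 0 z := funext hJconst
  have hJc : HasDerivAt (fun δ : ℝ => ∫ y : E, gaussDens d δ y) 0 0 := by
    rw [hconst]; exact hasDerivAt_const _ _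
  have h0 := (gauss_integral_hasDeriv (d := d) 0).unique hJc
  have h0' : (∫ y : E, (exp (-2 * 0) * ‖y‖ ^ 2 - (d:ℝ)) * gaussDens d 0 y)
      = ∫ z : E, (‖z‖ ^ 2 - (d : ℝ)) * gaussDens d 0 z := by
    apply integral_congr_ae
    filter_upwards with z
    norm_num
  rw [← h0']
  exact h0

end Aux

set_option maxHeartbeats 1000000 in
/-- Central claim of the proof of Theorem 1: the Gaussian-smoothed density
`p_δ(x') = (p ∗ N^δ_d)(x')` of a continuous probability density with finite second
moments satisfies `lim_{δ → −∞} (∂/∂δ) log p_δ(x') = 0` at any `x'` with `p(x') > 0`. -/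
theorem deriv_log_smoothed_density_tendsto_zero
    (d : ℕ) (hd : 0 < d)
    (p : EuclideanSpace ℝ (Fin d) → ℝ)
    (hp_cont : Continuous p)
    (hp_nonneg : ∀ y, 0 ≤ p y)
    (hp_prob : ∫ y, p y = 1)
    (hp_mom2 : Integrable fun y => ‖y‖ ^ 2 * p y)
    (x' : EuclideanSpace ℝ (Fin d)) (hx' : 0 < p x')
    (pδ : ℝ → ℝ)
    (hpδ : ∀ δ, pδ δ = ∫ y, p (x' - y) * gaussDens d δ y) :
    Tendsto (fun δ => deriv (fun δ' => Real.log (pδ δ')) δ) atBot (𝓝 0) := by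
  have hpδeq : pδ = fun δ => ∫ y, p (x' - y) * gaussDens d δ y := funext hpδ
  subst hpδeq
  have hp_int : Integrable p := by
    by_contra h
    rw [integral_undef h] at hp_prob
    norm_num at hp_prob
  have hq_int : Integrable (fun y => p (x' - y)) := hp_int.comp_sub_left x'
  have hcontq : Continuous (fun y => p (x' - y)) :=
    hp_cont.comp (continuous_const.sub continuous_id)
  have hq2_int : Integrable (fun y => ‖y‖ ^ 2 * p (x' - y)) := by
    have h2 : Integrable (fun y => ‖x' - y‖ ^ 2 * p (x' - y)) := hp_mom2.comp_sub_left x'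
    refine ((hq_int.const_mul (2 * ‖x'‖ ^ 2)).add (h2.const_mul 2)).mono'
      ((continuous_norm.pow 2).mul hcontq).aestronglyMeasurable ?_
    filter_upwards with y
    rw [Real.norm_eq_abs, abs_of_nonneg (mul_nonneg (by positivity) (hp_nonneg _))]
    have hnle : ‖y‖ ≤ ‖x'‖ + ‖x' - y‖ := by
      calc ‖y‖ = ‖x' - (x' - y)‖ := by rw [sub_sub_cancel]
        _ ≤ ‖x'‖ + ‖x' - y‖ := norm_sub_le _ _
    have h5 := hp_nonneg (x' - y)
    simp only [Pi.add_apply]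
    have h6 : ‖y‖ ^ 2 ≤ 2 * ‖x'‖ ^ 2 + 2 * ‖x' - y‖ ^ 2 := by
      nlinarith [norm_nonneg x', norm_nonneg (x' - y), sq_nonneg (‖x'‖ - ‖x' - y‖),
        mul_self_le_mul_self (norm_nonneg y) hnle]
    nlinarith [mul_le_mul_of_nonneg_right h6 h5]
  have hFint : ∀ δ : ℝ, Integrable (fun y => p (x' - y) * gaussDens d δ y) := by
    intro δ
    refine (hq_int.const_mul ((2 * π) ^ (-(d : ℝ) / 2) * exp (-(d : ℝ) * δ))).mono'
      (hcontq.mul (gauss_cont δ)).aestronglyMeasurable ?_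
    filter_upwards with y
    rw [Real.norm_eq_abs, abs_of_nonneg (mul_nonneg (hp_nonneg _) (gauss_pos δ y).le)]
    calc p (x' - y) * gaussDens d δ y
        ≤ p (x' - y) * ((2 * π) ^ (-(d : ℝ) / 2) * exp (-(d : ℝ) * δ)) :=
          mul_le_mul_of_nonneg_left (gauss_le δ y) (hp_nonneg _)
      _ = _ := by ring
  have hpos : ∀ δ : ℝ, 0 < ∫ y, p (x' - y) * gaussDens d δ y := by
    intro δ
    rw [integral_pos_iff_support_of_nonneg
      (fun y => mul_nonneg (hp_nonneg _) (gauss_pos δ y).le) (hFint δ)]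
    have hU : IsOpen ((fun y => p (x' - y) * gaussDens d δ y) ⁻¹' Set.Ioi 0) :=
      (hcontq.mul (gauss_cont δ)).isOpen_preimage _ isOpen_Ioi
    have hsub : ((fun y => p (x' - y) * gaussDens d δ y) ⁻¹' Set.Ioi 0)
        ⊆ Function.support (fun y => p (x' - y) * gaussDens d δ y) := fun y hy => ne_of_gt hy
    refine lt_of_lt_of_le (hU.measure_pos volume ⟨0, ?_⟩) (measure_mono hsub)
    simp only [Set.mem_preimage, Set.mem_Ioi, sub_zero]
    exact mul_pos hx' (gauss_pos δ 0)
  have hDeriv : ∀ δ₀ : ℝ, HasDerivAt (fun δ => ∫ y, p (x' - y) * gaussDens d δ y)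
      (∫ y, p (x' - y) * ((exp (-2 * δ₀) * ‖y‖ ^ 2 - d) * gaussDens d δ₀ y)) δ₀ := by
    intro δ₀
    have hbint : Integrable (fun y => p (x' - y) * ((exp (-2 * (δ₀ - 1)) * ‖y‖ ^ 2 + d)
        * ((2 * π) ^ (-(d : ℝ) / 2) * exp (-(d : ℝ) * (δ₀ - 1))))) := by
      have heq : (fun y => p (x' - y) * ((exp (-2 * (δ₀ - 1)) * ‖y‖ ^ 2 + d)
          * ((2 * π) ^ (-(d : ℝ) / 2) * exp (-(d : ℝ) * (δ₀ - 1)))))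
        = fun y => (exp (-2 * (δ₀ - 1)) * ((2 * π) ^ (-(d : ℝ) / 2) * exp (-(d : ℝ) * (δ₀ - 1))))
            * (‖y‖ ^ 2 * p (x' - y))
          + ((d : ℝ) * ((2 * π) ^ (-(d : ℝ) / 2) * exp (-(d : ℝ) * (δ₀ - 1)))) * p (x' - y) :=
        funext fun y => by ring
      rw [heq]
      exact (hq2_int.const_mul _).add (hq_int.const_mul _)
    have h := hasDerivAt_integral_of_dominated_loc_of_deriv_le (μ := volume)
      (F := fun δ y => p (x' - y) * gaussDens d δ y)
      (F' := fun δ y => p (x' - y) * ((exp (-2 * δ) * ‖y‖ ^ 2 - d) * gaussDens d δ y))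
      (x₀ := δ₀)
      (bound := fun y => p (x' - y) * ((exp (-2 * (δ₀ - 1)) * ‖y‖ ^ 2 + d)
        * ((2 * π) ^ (-(d : ℝ) / 2) * exp (-(d : ℝ) * (δ₀ - 1)))))
      (s := Metric.ball δ₀ 1) (Metric.ball_mem_nhds δ₀ one_pos)
      (Eventually.of_forall fun δ => (hcontq.mul (gauss_cont δ)).aestronglyMeasurable)
      (hFint δ₀)
      (hcontq.mul (((continuous_const.mul (continuous_norm.pow 2)).sub continuous_const).mul
        (gauss_cont δ₀))).aestronglyMeasurable
      ?_ hbint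
      (Eventually.of_forall fun y δ _ => (gauss_hasDeriv δ y).const_mul (p (x' - y)))
    · exact h.2
    · refine Eventually.of_forall fun y δ hδ => ?_
      have hδ1 : δ₀ - 1 < δ := by
        have h2 := abs_lt.1 (by simpa [Real.dist_eq] using hδ)
        linarith [h2.1]
      have hy : (0:ℝ) ≤ ‖y‖ ^ 2 := by positivity
      have hd0 : (0:ℝ) ≤ (d : ℝ) := Nat.cast_nonneg d
      have h1 : |exp (-2 * δ) * ‖y‖ ^ 2 - d| ≤ exp (-2 * (δ₀ - 1)) * ‖y‖ ^ 2 + d := by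
        have he : exp (-2 * δ) ≤ exp (-2 * (δ₀ - 1)) := Real.exp_le_exp.2 (by linarith)
        rw [abs_le]
        constructor <;> nlinarith [Real.exp_pos (-2 * δ), mul_le_mul_of_nonneg_right he hy]
      have h2 : gaussDens d δ y ≤ (2 * π) ^ (-(d : ℝ) / 2) * exp (-(d : ℝ) * (δ₀ - 1)) := by
        refine (gauss_le δ y).trans ?_
        refine mul_le_mul_of_nonneg_left (Real.exp_le_exp.2 ?_) (by positivity)
        nlinarith
      show ‖p (x' - y) * ((exp (-2 * δ) * ‖y‖ ^ 2 - d) * gaussDens d δ y)‖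
          ≤ p (x' - y) * ((exp (-2 * (δ₀ - 1)) * ‖y‖ ^ 2 + d)
            * ((2 * π) ^ (-(d : ℝ) / 2) * exp (-(d : ℝ) * (δ₀ - 1))))
      rw [Real.norm_eq_abs, abs_mul, abs_of_nonneg (hp_nonneg _), abs_mul,
        abs_of_pos (gauss_pos δ y)]
      refine mul_le_mul_of_nonneg_left ?_ (hp_nonneg _)
      exact mul_le_mul h1 h2 (gauss_pos δ y).le (by positivity)
  have hPz : ∀ δ : ℝ, (∫ y, p (x' - y) * gaussDens d δ y)
      = ∫ z, p (x' - exp δ • z) * gaussDens d 0 z := by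
    intro δ
    have h := cov_smul (d := d) (fun y => p (x' - y) * gaussDens d δ y) δ
    simp only [gauss_scale] at h
    rw [show (fun z : EuclideanSpace ℝ (Fin d) =>
          p (x' - exp δ • z) * (exp (-(d : ℝ) * δ) * gaussDens d 0 z))
        = fun z => exp (-(d : ℝ) * δ) * (p (x' - exp δ • z) * gaussDens d 0 z) from
      funext fun z => by ring, integral_const_mul] at h
    exact (mul_left_cancel₀ (Real.exp_ne_zero _) h).symm
  have hnz : ∀ δ : ℝ, ∀ z : EuclideanSpace ℝ (Fin d),
      exp (-2 * δ) * ‖exp δ • z‖ ^ 2 = ‖z‖ ^ 2 := by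
    intro δ z
    rw [norm_smul, Real.norm_eq_abs, abs_of_pos (Real.exp_pos δ), mul_pow,
      show (exp δ) ^ 2 = exp (2 * δ) from by rw [sq, ← Real.exp_add]; ring_nf,
      ← mul_assoc, ← Real.exp_add]
    norm_num
  have hDz : ∀ δ : ℝ, (∫ y, p (x' - y) * ((exp (-2 * δ) * ‖y‖ ^ 2 - d) * gaussDens d δ y))
      = ∫ z, p (x' - exp δ • z) * ((‖z‖ ^ 2 - d) * gaussDens d 0 z) := by
    intro δ
    have h := cov_smul (d := d)
      (fun y => p (x' - y) * ((exp (-2 * δ) * ‖y‖ ^ 2 - d) * gaussDens d δ y)) δ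
    simp only [hnz δ, gauss_scale] at h
    rw [show (fun z : EuclideanSpace ℝ (Fin d) => p (x' - exp δ • z)
          * ((‖z‖ ^ 2 - (d:ℝ)) * (exp (-(d : ℝ) * δ) * gaussDens d 0 z)))
        = fun z => exp (-(d : ℝ) * δ)
          * (p (x' - exp δ • z) * ((‖z‖ ^ 2 - (d:ℝ)) * gaussDens d 0 z)) from
      funext fun z => by ring, integral_const_mul] at h
    exact (mul_left_cancel₀ (Real.exp_ne_zero _) h).symm
  have hK1 := key_tendsto p hp_cont hp_nonneg hp_int x' (fun z => gaussDens d 0 z)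
    (gauss_cont 0) (C := (2 * π) ^ (-(d : ℝ) / 2))
    (fun z => by rw [abs_of_pos (gauss_pos 0 z)]; exact gauss_bound_quarter z)
  have hK2 := key_tendsto p hp_cont hp_nonneg hp_int x'
    (fun z => (‖z‖ ^ 2 - (d:ℝ)) * gaussDens d 0 z)
    (((continuous_norm.pow 2).sub continuous_const).mul (gauss_cont 0))
    (C := (2 * π) ^ (-(d : ℝ) / 2) * (4 + (d:ℝ))) (fun z => gauss2_bound_quarter z)
  rw [gauss_moment_zero, mul_zero] at hK2
  have hM1 : 0 < ∫ z, gaussDens d 0 z := by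
    rw [integral_pos_iff_support_of_nonneg (fun z => (gauss_pos 0 z).le)
      (integrable_gauss_dens 0)]
    refine lt_of_lt_of_le
      ((Metric.isOpen_ball (x := (0 : EuclideanSpace ℝ (Fin d))) (ε := 1)).measure_pos volume
        (Metric.nonempty_ball.2 one_pos)) (measure_mono ?_)
    intro z _
    exact (gauss_pos 0 z).ne'
  have hne : p x' * (∫ z, gaussDens d 0 z) ≠ 0 := (mul_pos hx' hM1).ne'
  have hfin := hK2.div hK1 hne
  rw [zero_div] at hfin
  refine Tendsto.congr (fun δ => ?_) hfin
  have hlog := ((hDeriv δ).log (hpos δ).ne').deriv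
  rw [hDz δ, hPz δ] at hlog
  exact hlog.symm
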